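/- For any finite set S of constructor patterns, the recursive procedure minimum (which processes the elements of S one by one, maintaining a kernel: if the current pattern q is subsumed by the remaining patterns together with the kernel, it returns the smaller of the results of recursing with q added to the kernel and of recursing with q discarded; otherwise it adds q to the kernel; when no patterns remain it returns the kernel) returns a valid subset S' ⊆ S of minimum cardinality, i.e., ⟦S'⟧ = ⟦S⟧ and |S'| ≤ |S''| for every S'' ⊆ S with ⟦S''⟧ = ⟦S⟧. -/
import Mathlib


/-- A constructor signature: a type of constructor symbols with arities. -/
structure Sig where
  C : Type
  ar : C → ℕ

/-- Values: ground constructor terms over the signature `S`. -/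
inductive Val (S : Sig) : Type where
  | mk : (c : S.C) → (Fin (S.ar c) → Val S) → Val S

/-- Constructor patterns: terms over the constructors and variables. -/
inductive Pat (S : Sig) : Type where
  | var : ℕ → Pat S
  | cons : (c : S.C) → (Fin (S.ar c) → Pat S) → Pat S

namespace Pat

variable {S : Sig}

/-- Variables occurring in a pattern. -/
def vars : Pat S → Set ℕ
  | var x => {x}
  | cons _ ps => ⋃ i, vars (ps i)

/-- Linearity: every variable occurs at most once. -/
inductive Linear : Pat S → Prop where
  | var (x : ℕ) : Linear (var x)
  | cons (c : S.C) (ps : Fin (S.ar c) → Pat S) :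
      (∀ i, Linear (ps i)) →
      (∀ i j, i ≠ j → Disjoint (vars (ps i)) (vars (ps j))) →
      Linear (cons c ps)

/-- Applying a (ground) substitution to a constructor pattern yields a value. -/
def subApp (σ : ℕ → Val S) : Pat S → Val S
  | var x => σ x
  | cons c ps => Val.mk c fun i => subApp σ (ps i)

/-- Ground semantics: the set of all ground constructor instances of `p`. -/
def sem (p : Pat S) : Set (Val S) := {v | ∃ σ : ℕ → Val S, subApp σ p = v}

/-- The instance relation, defined inductively:
a variable matches any value; `c(p₁,…,pₙ)` matches `c(v₁,…,vₙ)` iff each `pᵢ` matches `vᵢ`. -/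
def Matches : Pat S → Val S → Prop
  | var _, _ => True
  | cons c ps, v => ∃ vs : Fin (S.ar c) → Val S, v = Val.mk c vs ∧ ∀ i, Matches (ps i) (vs i)

end Pat


open scoped Classical

noncomputable instance {S : Sig} : DecidableEq (Pat S) := Classical.decEq _

/-- The ground semantics of a finite set of patterns. -/
def semF {S : Sig} (P : Finset (Pat S)) : Set (Val S) := ⋃ p ∈ P, Pat.sem p

/-- A pattern `q` is subsumed by a finite set `P` of patterns. -/
def Subsumes {S : Sig} (P : Finset (Pat S)) (q : Pat S) : Prop := Pat.sem q ⊆ semF P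

/-- `smallestSet P P'` returns `P` if `|P| < |P'|`, and `P'` otherwise. -/
noncomputable def smallestSet {S : Sig} (P P' : Finset (Pat S)) : Finset (Pat S) :=
  if P.card < P'.card then P else P'

/-- The auxiliary procedure `minimum'` of Figure 2: it processes the patterns one
by one maintaining a kernel; if the current pattern `q` is subsumed by the
remaining patterns together with the kernel it returns the smaller of the results
of recursing with `q` added to the kernel and of recursing with `q` discarded;
otherwise it adds `q` to the kernel. -/
noncomputable def minimum' {S : Sig} : List (Pat S) → Finset (Pat S) → Finset (Pat S)
  | [], kernel => kernel
  | q :: P, kernel =>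
      if Subsumes (P.toFinset ∪ kernel) q then
        smallestSet (minimum' P (insert q kernel)) (minimum' P kernel)
      else
        minimum' P (insert q kernel)

/-- `minimum S = minimum' S ∅`. -/
noncomputable def minimum {S : Sig} (l : List (Pat S)) : Finset (Pat S) :=
  minimum' l ∅

lemma semF_union {S : Sig} (P Q : Finset (Pat S)) :
    semF (P ∪ Q) = semF P ∪ semF Q :=
  Finset.set_biUnion_union P Q Pat.sem

lemma semF_insert {S : Sig} (q : Pat S) (P : Finset (Pat S)) :
    semF (insert q P) = Pat.sem q ∪ semF P :=
  Finset.set_biUnion_insert q P Pat.sem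

lemma sem_subset_semF {S : Sig} {q : Pat S} {P : Finset (Pat S)} (hq : q ∈ P) :
    Pat.sem q ⊆ semF P := by
  intro v hv; simp only [semF, Set.mem_iUnion]; exact ⟨q, hq, hv⟩

lemma minimum'_spec {S : Sig} (l : List (Pat S)) (kernel : Finset (Pat S)) :
    minimum' l kernel ⊆ l.toFinset ∪ kernel ∧
    semF (minimum' l kernel) = semF (l.toFinset ∪ kernel) ∧
    ∀ P'', kernel ⊆ P'' → P'' ⊆ l.toFinset ∪ kernel →
      semF P'' = semF (l.toFinset ∪ kernel) → (minimum' l kernel).card ≤ P''.card := by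
  induction l generalizing kernel with
  | nil =>
    refine ⟨?_, ?_, fun P'' h hs _ => ?_⟩
    · simp [minimum']
    · simp [minimum']
    · simp only [minimum']; exact Finset.card_le_card h
  | cons q P ih =>
    have hset : (q :: P).toFinset ∪ kernel = insert q (P.toFinset ∪ kernel) := by
      simp [Finset.insert_union]
    have hset2 : P.toFinset ∪ insert q kernel = insert q (P.toFinset ∪ kernel) :=
      Finset.union_insert _ _ _
    by_cases h : Subsumes (P.toFinset ∪ kernel) q
    · -- subsumed case
      have hsem : semF ((q :: P).toFinset ∪ kernel) = semF (P.toFinset ∪ kernel) := by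
        rw [hset, semF_insert]
        exact Set.union_eq_self_of_subset_left h
      obtain ⟨hsub1, hsem1, hmin1⟩ := ih (insert q kernel)
      obtain ⟨hsub2, hsem2, hmin2⟩ := ih kernel
      have heq : minimum' (q :: P) kernel =
          smallestSet (minimum' P (insert q kernel)) (minimum' P kernel) := by
        simp [minimum', h]
      rw [heq]
      unfold smallestSet
      split
      · refine ⟨?_, ?_, ?_⟩
        · rw [hset]; rw [hset2] at hsub1; exact hsub1
        · rw [hsem1, hset2, hset]
        · intro P'' hk hsub hsemP
          by_cases hqP : q ∈ P''
          · exact hmin1 P'' (Finset.insert_subset hqP hk)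
              (by rw [hset2]; rw [hset] at hsub; exact hsub)
              (by rw [hset2, ← hset]; exact hsemP)
          · have := hmin2 P'' hk
              (fun x hx => by
                have := hsub hx; rw [hset, Finset.mem_insert] at this
                rcases this with h1 | h1
                · exact absurd (h1 ▸ hx) hqP
                · exact h1)
              (by rw [← hsem]; exact hsemP)
            omega
      · refine ⟨?_, ?_, ?_⟩
        · rw [hset]; exact hsub2.trans (Finset.subset_insert _ _)
        · rw [hsem2, hsem]
        · intro P'' hk hsub hsemP
          by_cases hqP : q ∈ P''
          · have := hmin1 P'' (Finset.insert_subset hqP hk)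
              (by rw [hset2]; rw [hset] at hsub; exact hsub)
              (by rw [hset2, ← hset]; exact hsemP)
            omega
          · exact hmin2 P'' hk
              (fun x hx => by
                have := hsub hx; rw [hset, Finset.mem_insert] at this
                rcases this with h1 | h1
                · exact absurd (h1 ▸ hx) hqP
                · exact h1)
              (by rw [← hsem]; exact hsemP)
    · -- not subsumed case
      have heq : minimum' (q :: P) kernel = minimum' P (insert q kernel) := by
        simp [minimum', h]
      obtain ⟨hsub1, hsem1, hmin1⟩ := ih (insert q kernel)
      rw [heq]
      refine ⟨?_, ?_, ?_⟩
      · rw [hset]; rw [hset2] at hsub1; exact hsub1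
      · rw [hsem1, hset2, hset]
      · intro P'' hk hsub hsemP
        have hqP : q ∈ P'' := by
          by_contra hqP
          apply h
          have hsubP : P'' ⊆ P.toFinset ∪ kernel := fun x hx => by
            have := hsub hx; rw [hset, Finset.mem_insert] at this
            rcases this with h1 | h1
            · exact absurd (h1 ▸ hx) hqP
            · exact h1
          have hq : Pat.sem q ⊆ semF P'' := by
            rw [hsemP]
            exact sem_subset_semF (by rw [hset]; exact Finset.mem_insert_self _ _)
          exact hq.trans (fun v hv => by
            simp only [semF, Set.mem_iUnion] at hv ⊢
            obtain ⟨p, hp, hvp⟩ := hv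
            exact ⟨p, hsubP hp, hvp⟩)
        exact hmin1 P'' (Finset.insert_subset hqP hk)
          (by rw [hset2]; rw [hset] at hsub; exact hsub)
          (by rw [hset2, ← hset]; exact hsemP)

/-- Minimal subset: `minimum` computes a valid subset of `S`
of minimum cardinality. -/
theorem stmt8 (S : Sig) (l : List (Pat S)) (hnd : l.Nodup)
    (hlin : ∀ p ∈ l, Pat.Linear p) :
    minimum l ⊆ l.toFinset ∧
    semF (minimum l) = semF l.toFinset ∧
    ∀ P'' ⊆ l.toFinset, semF P'' = semF l.toFinset → (minimum l).card ≤ P''.card := by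
  obtain ⟨h1, h2, h3⟩ := minimum'_spec l (∅ : Finset (Pat S))
  simp only [Finset.union_empty] at h1 h2 h3
  exact ⟨h1, h2, fun P'' hs hsem => h3 P'' (Finset.empty_subset _) hs hsem⟩
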